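/- If every one-vertex 3-sphere triangulation with n ≥ 3 tetrahedra can be connected, via a path in the restricted Pachner graph staying within levels n to n+2, to a triangulation admitting a 3-2 move, and level sets of the restricted Pachner graph have size exp(O(n log n)), then any one-vertex 3-sphere triangulation of size n can be transformed into the 2-tetrahedron canonical form using exp(O(n log n)) Pachner moves. -/

import Mathlib

private lemma myGetLastCongr {α : Type*} {l₁ l₂ : List α} (h₁ : l₁ ≠ []) (h₂ : l₂ ≠ [])
    (h : l₁ = l₂) : l₁.getLast h₁ = l₂.getLast h₂ := by subst h; rfl

private lemma myDecomp {α : Type*} : ∀ {l : List α}, ¬ l.Nodup →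
    ∃ (a b c : List α) (d : α), l = a ++ d :: (b ++ d :: c) := by
  intro l
  induction l with
  | nil => intro h; exact absurd List.nodup_nil h
  | cons y t ih =>
    intro h
    rw [List.nodup_cons] at h
    push_neg at h
    by_cases hy : y ∈ t
    · obtain ⟨b, c, rfl⟩ := List.append_of_mem hy
      exact ⟨[], b, c, y, by simp⟩
    · obtain ⟨a, b, c, d, rfl⟩ := ih (h hy)
      exact ⟨y :: a, b, c, d, by simp⟩

private lemma myShorten {T : Type*} {adj : T → T → Prop} :
    ∀ (n : ℕ) (x : T) (l : List T), l.length ≤ n → ∀ (hl : l ≠ []), List.Chain adj x l →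
    ∃ (l' : List T) (hl' : l' ≠ []), l'.Nodup ∧ List.Chain adj x l' ∧ (∀ z ∈ l', z ∈ l) ∧
      l'.getLast hl' = l.getLast hl := by
  intro n
  induction n with
  | zero =>
    intro x l hlen hl _
    cases l with
    | nil => exact absurd rfl hl
    | cons a t => simp at hlen
  | succ n ih =>
    intro x l hlen hl hch
    by_cases hnd : l.Nodup
    · exact ⟨l, hl, hnd, hch, fun z hz => hz, rfl⟩
    · obtain ⟨a, b, c, d, rfl⟩ := myDecomp hnd
      rw [List.Chain, List.isChain_cons_split] at hch
      obtain ⟨h1, h2⟩ := hch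
      rw [List.isChain_cons_split] at h2
      obtain ⟨-, h3⟩ := h2
      have hch' : List.Chain adj x (a ++ d :: c) := List.isChain_cons_split.2 ⟨h1, h3⟩
      have hne' : a ++ d :: c ≠ [] := by simp
      have hlen' : (a ++ d :: c).length ≤ n := by
        simp only [List.length_append, List.length_cons] at hlen ⊢
        omega
      obtain ⟨l', hl', hnd', hch'', hsub, hlast⟩ := ih x _ hlen' hne' hch'
      refine ⟨l', hl', hnd', hch'', fun z hz => ?_, ?_⟩
      · have := hsub z hz
        simp only [List.mem_append, List.mem_cons] at this ⊢
        tauto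
      · rw [hlast]
        have e1 : a ++ d :: c = a ++ (d :: c) := rfl
        have e2 : a ++ d :: (b ++ d :: c) = (a ++ d :: b) ++ (d :: c) := by simp
        rw [myGetLastCongr hne' (by simp) e1,
            myGetLastCongr hl (by simp : (a ++ d :: b) ++ (d :: c) ≠ []) e2,
            List.getLast_append_of_right_ne_nil a (d :: c) (by simp),
            List.getLast_append_of_right_ne_nil (a ++ d :: b) (d :: c) (by simp)]

private lemma myChainAppend {T : Type*} {adj : T → T → Prop} {l₂ : List T} :
    ∀ (l₁ : List T) (hne : l₁ ≠ []) (x : T), List.Chain adj x l₁ →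
      List.Chain adj (l₁.getLast hne) l₂ → List.Chain adj x (l₁ ++ l₂) := by
  intro l₁
  induction l₁ with
  | nil => intro hne; exact absurd rfl hne
  | cons y t ih =>
    intro hne x h₁ h₂
    rw [List.Chain, List.chain_cons] at h₁
    rcases h₁ with ⟨hxy, ht⟩
    rcases eq_or_ne t [] with rfl | htne
    · have : (y :: ([] : List T)).getLast hne = y := rfl
      rw [this] at h₂
      exact List.chain_cons.2 ⟨hxy, h₂⟩
    · rw [List.getLast_cons htne] at h₂
      exact List.chain_cons.2 ⟨hxy, ih htne y ht h₂⟩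

private lemma myNodupLen {T : Type*} {l : List T} (hnd : l.Nodup) {s : Set T}
    (hs : s.Finite) (hsub : ∀ z ∈ l, z ∈ s) : l.length ≤ s.ncard := by
  classical
  have h2 : l.toFinset ⊆ hs.toFinset := by
    intro z hz
    rw [Set.Finite.mem_toFinset]
    exact hsub z (List.mem_toFinset.1 hz)
  calc l.length = l.toFinset.card := (List.toFinset_card_of_nodup hnd).symm
    _ ≤ hs.toFinset.card := Finset.card_le_card h2
    _ = s.ncard := (Set.ncard_eq_toFinset_card s hs).symm

set_option maxHeartbeats 1000000 in
/-- Conditional complexity statement: if every one-vertex 3-sphere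
triangulation at level n ≥ 3 of the restricted Pachner graph admits a
simplification path (to level n-1) of excess height ≤ 2, level sets of the
graph are finite of size exp(O(k log k)), and every level-2 node can be brought
to the canonical node c within levels ≤ 4, then any node can be transformed
into c using exp(O(n log n)) Pachner moves. -/
theorem stmt18 (T : Type*) (level : T → ℕ) (adj : T → T → Prop)
    (hfin : ∀ k : ℕ, Finite {x : T // level x = k})
    (hcount : ∃ C : ℝ, 0 < C ∧ ∃ N : ℕ, ∀ k : ℕ, N ≤ k →
      (Nat.card {x : T // level x = k} : ℝ) ≤ Real.exp (C * k * Real.log k))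
    (c : T) (hc : level c = 2)
    (hsimp : ∀ x : T, 3 ≤ level x → ∃ l : List T, ∃ h : l ≠ [],
      List.Chain adj x l ∧ (∀ z ∈ l, level z ≤ level x + 2) ∧
      level (l.getLast h) = level x - 1)
    (h2 : ∀ y : T, level y = 2 → ∃ l : List T, ∃ h : l ≠ [],
      List.Chain adj y l ∧ (∀ z ∈ l, level z ≤ 4) ∧ l.getLast h = c) :
    ∃ C' : ℝ, 0 < C' ∧ ∃ N : ℕ, ∀ x : T, N ≤ level x →
      ∃ l : List T, ∃ h : l ≠ [],
        List.Chain adj x l ∧ l.getLast h = c ∧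
        (l.length : ℝ) ≤ Real.exp (C' * level x * Real.log (level x)) := by
  classical
  obtain ⟨C, hC, N, hN⟩ := hcount
  -- the set of nodes of level at most k, and its (finite) cardinality
  set S : ℕ → Set T := fun k => {x | level x ≤ k} with hS
  have hSfin : ∀ k, (S k).Finite := by
    intro k
    induction k with
    | zero =>
      have he : S 0 = {x | level x = 0} := by ext x; simp [hS, Nat.le_zero]
      rw [he]
      exact @Set.toFinite _ _ (hfin 0)
    | succ k ihk =>
      have he : S (k + 1) = S k ∪ {x | level x = k + 1} := by
        ext x; simp only [hS, Set.mem_setOf_eq, Set.mem_union]; omega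
      rw [he]
      exact ihk.union (@Set.toFinite _ _ (hfin (k + 1)))
  set f : ℕ → ℕ := fun k => (S k).ncard with hf
  have hmono : ∀ {j k : ℕ}, j ≤ k → f j ≤ f k := by
    intro j k hjk
    exact Set.ncard_le_ncard (fun x hx => le_trans hx hjk) (hSfin k)
  have hfsum : ∀ k, f k ≤ ∑ j ∈ Finset.range (k + 1), Nat.card {x : T // level x = j} := by
    intro k
    induction k with
    | zero =>
      have he : S 0 = {x | level x = 0} := by ext x; simp [hS, Nat.le_zero]
      simp only [hf, he, Finset.range_one, Finset.sum_singleton]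
      rw [← Nat.card_coe_set_eq]
      rfl
    | succ k ihk =>
      have he : S (k + 1) = S k ∪ {x | level x = k + 1} := by
        ext x; simp only [hS, Set.mem_setOf_eq, Set.mem_union]; omega
      have h1 : f (k + 1) ≤ f k + ({x | level x = k + 1} : Set T).ncard := by
        rw [hf]; simp only; rw [he]; exact Set.ncard_union_le _ _
      have h2' : ({x | level x = k + 1} : Set T).ncard = Nat.card {x : T // level x = k + 1} :=
        (Nat.card_coe_set_eq _).symm
      rw [Finset.sum_range_succ]
      omega
  -- the key inductive simplification: from level n ≥ 2 one reaches c
  -- with a path of length at most n * f (n + 2)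
  have key : ∀ n : ℕ, 2 ≤ n → ∀ x : T, level x = n →
      ∃ (l : List T) (hl : l ≠ []), List.Chain adj x l ∧ l.getLast hl = c ∧
        l.length ≤ n * f (n + 2) := by
    intro n hn
    induction n, hn using Nat.le_induction with
    | base =>
      intro x hx
      obtain ⟨l, hl, hchain, hlev, hlast⟩ := h2 x hx
      obtain ⟨l', hl', hnd', hch', hsub, hlast'⟩ := myShorten l.length x l le_rfl hl hchain
      refine ⟨l', hl', hch', by rw [hlast', hlast], ?_⟩
      have hlen : l'.length ≤ f 4 := by
        apply myNodupLen hnd' (hSfin 4)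
        intro z hz
        exact hlev z (hsub z hz)
      have h4 : f (2 + 2) = f 4 := by norm_num
      omega
    | succ n hn ih =>
      intro x hx
      obtain ⟨l₁, hl₁, hchain₁, hlev₁, hlast₁⟩ := hsimp x (by omega)
      obtain ⟨l₁', hl₁', hnd₁', hch₁', hsub₁, hlast₁'⟩ :=
        myShorten l₁.length x l₁ le_rfl hl₁ hchain₁
      have hy : level (l₁'.getLast hl₁') = n := by
        rw [hlast₁', hlast₁, hx]
        omega
      obtain ⟨l₂, hl₂, hchain₂, hlast₂, hlen₂⟩ := ih (l₁'.getLast hl₁') hy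
      have hne : l₁' ++ l₂ ≠ [] := by
        simp [hl₁']
      refine ⟨l₁' ++ l₂, hne, myChainAppend l₁' hl₁' x hch₁' hchain₂, ?_, ?_⟩
      · rw [myGetLastCongr hne hne rfl, List.getLast_append_of_right_ne_nil l₁' l₂ hl₂]
        exact hlast₂
      · have hlen₁ : l₁'.length ≤ f (n + 3) := by
          apply myNodupLen hnd₁' (hSfin (n + 3))
          intro z hz
          have := hlev₁ z (hsub₁ z hz)
          simpa only [hS, Set.mem_setOf_eq, hx] using this
        have hm : f (n + 2) ≤ f (n + 3) := hmono (by omega)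
        have : (l₁' ++ l₂).length = l₁'.length + l₂.length := List.length_append
        rw [this]
        calc l₁'.length + l₂.length ≤ f (n + 3) + n * f (n + 2) := by omega
          _ ≤ f (n + 3) + n * f (n + 3) := by
              exact Nat.add_le_add_left (Nat.mul_le_mul_left n hm) _
          _ = (n + 1) * f (n + 3) := by ring
          _ = (n + 1) * f ((n + 1) + 2) := by norm_num
  -- the bound on M₀, the max cardinality of low levels
  set M₀ : ℕ := (Finset.range (N + 1)).sup (fun j => Nat.card {x : T // level x = j}) with hM₀
  refine ⟨4 * C + 5, by linarith, max (max (N + 1) (M₀ + 1)) 8, ?_⟩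
  intro x hx
  set n : ℕ := level x with hn
  have hn8 : 8 ≤ n := le_trans (le_max_right _ _) hx
  have hnN : N + 1 ≤ n := le_trans (le_trans (le_max_left _ _) (le_max_left _ _)) hx
  have hnM : M₀ + 1 ≤ n := le_trans (le_trans (le_max_right _ _) (le_max_left _ _)) hx
  obtain ⟨l, hl, hchain, hlast, hlen⟩ := key n (by omega) x rfl
  refine ⟨l, hl, hchain, hlast, ?_⟩
  -- now the numerical estimate
  set E : ℝ := Real.exp (C * ((n : ℝ) + 2) * Real.log ((n : ℝ) + 2)) with hE
  have hEpos : 0 < E := Real.exp_pos _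
  have hE1 : 1 ≤ E := by
    rw [hE, ← Real.exp_zero, Real.exp_le_exp]
    have hl2 : 0 ≤ Real.log ((n : ℝ) + 2) :=
      Real.log_nonneg (by nlinarith [Nat.cast_nonneg (α := ℝ) n])
    exact mul_nonneg (mul_nonneg hC.le (by positivity)) hl2
  -- each level cardinality up to n+2 is at most M₀ + E
  have hterm : ∀ j ∈ Finset.range (n + 3),
      (Nat.card {x : T // level x = j} : ℝ) ≤ (M₀ : ℝ) + E := by
    intro j hj
    rw [Finset.mem_range] at hj
    by_cases hjN : j ≤ N
    · have : Nat.card {x : T // level x = j} ≤ M₀ :=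
        Finset.le_sup (f := fun j => Nat.card {x : T // level x = j})
          (Finset.mem_range.2 (by omega))
      have := (Nat.cast_le (α := ℝ)).2 this
      linarith
    · push_neg at hjN
      have hNj : N ≤ j := by omega
      have h1j : 1 ≤ j := by omega
      refine le_trans (hN j hNj) ?_
      have hexp : C * (j : ℝ) * Real.log j ≤ C * ((n : ℝ) + 2) * Real.log ((n : ℝ) + 2) := by
        have hjn : (j : ℝ) ≤ (n : ℝ) + 2 := by
          have : (j : ℝ) ≤ ((n + 2 : ℕ) : ℝ) := Nat.cast_le.2 (by omega)
          push_cast at this; linarith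
        have hlog : Real.log j ≤ Real.log ((n : ℝ) + 2) :=
          Real.log_le_log (by exact_mod_cast h1j) hjn
        have hlognn : 0 ≤ Real.log j := Real.log_nonneg (by exact_mod_cast h1j)
        have h1 : C * (j : ℝ) ≤ C * ((n : ℝ) + 2) := by nlinarith
        have h2' : 0 ≤ C * ((n : ℝ) + 2) := mul_nonneg hC.le (by positivity)
        exact mul_le_mul h1 hlog hlognn h2'
      have := Real.exp_le_exp.2 hexp
      rw [← hE] at this
      linarith
  -- hence f (n+2) ≤ (n+3) * (M₀ + E)
  have hfbound : (f (n + 2) : ℝ) ≤ ((n : ℝ) + 3) * ((M₀ : ℝ) + E) := by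
    have h1 : (f (n + 2) : ℝ) ≤
        ∑ j ∈ Finset.range (n + 3), (Nat.card {x : T // level x = j} : ℝ) := by
      have := hfsum (n + 2)
      have h' := (Nat.cast_le (α := ℝ)).2 this
      rw [Nat.cast_sum] at h'
      convert h' using 3
    refine le_trans h1 ?_
    have := Finset.sum_le_card_nsmul (Finset.range (n + 3)) _ ((M₀ : ℝ) + E) hterm
    rw [Finset.card_range, nsmul_eq_mul] at this
    refine le_trans this ?_
    push_cast
    linarith
  -- total length bound
  have htotal : (l.length : ℝ) ≤ ((n : ℝ) + 3) ^ 2 * ((M₀ : ℝ) + 1) * E := by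
    have h1 : (l.length : ℝ) ≤ (n : ℝ) * (f (n + 2) : ℝ) := by
      have := (Nat.cast_le (α := ℝ)).2 hlen
      push_cast at this
      linarith
    have h2' : (n : ℝ) * (f (n + 2) : ℝ) ≤ (n : ℝ) * (((n : ℝ) + 3) * ((M₀ : ℝ) + E)) := by
      have hn0 : (0 : ℝ) ≤ n := Nat.cast_nonneg n
      nlinarith
    have h3 : (M₀ : ℝ) + E ≤ ((M₀ : ℝ) + 1) * E := by
      have hM0 : (0 : ℝ) ≤ (M₀ : ℝ) := Nat.cast_nonneg _
      nlinarith
    have hn0 : (0 : ℝ) ≤ n := Nat.cast_nonneg n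
    have hn3 : (n : ℝ) ≤ (n : ℝ) + 3 := by linarith
    nlinarith [Nat.cast_nonneg (α := ℝ) M₀, hEpos]
  refine le_trans htotal ?_
  -- rewrite the left side as an exponential
  have hrw : ((n : ℝ) + 3) ^ 2 * ((M₀ : ℝ) + 1) * E =
      Real.exp (2 * Real.log ((n : ℝ) + 3) + Real.log ((M₀ : ℝ) + 1) +
        C * ((n : ℝ) + 2) * Real.log ((n : ℝ) + 2)) := by
    rw [Real.exp_add, Real.exp_add, ← hE]
    have e1 : Real.exp (2 * Real.log ((n : ℝ) + 3)) = ((n : ℝ) + 3) ^ 2 := by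
      rw [show (2 : ℝ) * Real.log ((n : ℝ) + 3) = Real.log (((n : ℝ) + 3) ^ 2) by
            rw [Real.log_pow]; push_cast; ring,
          Real.exp_log (by positivity)]
    have e2 : Real.exp (Real.log ((M₀ : ℝ) + 1)) = (M₀ : ℝ) + 1 :=
      Real.exp_log (by positivity)
    rw [e1, e2]
  rw [hrw, Real.exp_le_exp]
  -- final exponent comparison
  have hnr : (8 : ℝ) ≤ (n : ℝ) := by exact_mod_cast hn8
  have hMr : (M₀ : ℝ) + 1 ≤ (n : ℝ) := by
    have := (Nat.cast_le (α := ℝ)).2 hnM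
    push_cast at this; linarith
  have hlog2 : (2 : ℝ) ≤ Real.log n := by
    rw [Real.le_log_iff_exp_le (by linarith)]
    have h1 : Real.exp 1 < 2.7182818286 := Real.exp_one_lt_d9
    have h2' : Real.exp 2 = Real.exp 1 * Real.exp 1 := by
      rw [← Real.exp_add]; norm_num
    nlinarith [Real.exp_pos 1]
  have p1 : Real.log ((n : ℝ) + 3) ≤ (n : ℝ) + 3 := by
    have := Real.log_le_sub_one_of_pos (show (0:ℝ) < (n:ℝ) + 3 by linarith)
    linarith
  have p2 : Real.log ((M₀ : ℝ) + 1) ≤ (n : ℝ) := by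
    have := Real.log_le_sub_one_of_pos (show (0:ℝ) < (M₀:ℝ) + 1 by positivity)
    linarith
  have p3 : Real.log ((n : ℝ) + 2) ≤ 2 * Real.log n := by
    have h1 : (n : ℝ) + 2 ≤ (n : ℝ) ^ 2 := by nlinarith
    have h2' : Real.log ((n : ℝ) + 2) ≤ Real.log ((n : ℝ) ^ 2) :=
      Real.log_le_log (by linarith) h1
    rw [Real.log_pow] at h2'
    push_cast at h2'
    linarith
  have hlogpos : 0 < Real.log n := by linarith
  have t3 : C * ((n : ℝ) + 2) * Real.log ((n : ℝ) + 2) ≤ 4 * C * ((n : ℝ) * Real.log n) := by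
    have h1 : C * ((n : ℝ) + 2) ≤ C * (2 * (n : ℝ)) := by nlinarith
    have hlnn : 0 ≤ Real.log ((n : ℝ) + 2) := Real.log_nonneg (by linarith)
    calc C * ((n : ℝ) + 2) * Real.log ((n : ℝ) + 2)
        ≤ C * (2 * (n : ℝ)) * (2 * Real.log n) := by
          apply mul_le_mul h1 p3 hlnn (by positivity)
      _ = 4 * C * ((n : ℝ) * Real.log n) := by ring
  have t1 : 2 * Real.log ((n : ℝ) + 3) ≤ 2 * ((n : ℝ) * Real.log n) := by nlinarith
  have t2 : Real.log ((M₀ : ℝ) + 1) ≤ (n : ℝ) * Real.log n := by nlinarith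
  have hfinal : 2 * Real.log ((n : ℝ) + 3) + Real.log ((M₀ : ℝ) + 1) +
      C * ((n : ℝ) + 2) * Real.log ((n : ℝ) + 2) ≤ (4 * C + 5) * ((n : ℝ) * Real.log n) := by
    nlinarith [mul_pos (show (0:ℝ) < n by linarith) hlogpos]
  calc 2 * Real.log ((n : ℝ) + 3) + Real.log ((M₀ : ℝ) + 1) +
      C * ((n : ℝ) + 2) * Real.log ((n : ℝ) + 2)
      ≤ (4 * C + 5) * ((n : ℝ) * Real.log n) := hfinal
    _ = (4 * C + 5) * (n : ℝ) * Real.log ((n : ℝ)) := by ring
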